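/- arXiv:1503.02523 — 5 statements merged into one kernel-verified Lean document; each statement's English description precedes it below -/
import Mathlib

section
/- Let V be a finite-dimensional vector space of dimension m over a field k, with basis v_1, ..., v_m. Suppose for each i we are given a finite index set T_i and vectors v_{i,r} ∈ V for r ∈ T_i such that v_i = Σ_{r ∈ T_i} v_{i,r}. Then for each i there exists r_i ∈ T_i such that {v_{i,r_i}}_{i=1}^m is a basis of V. -/
/-- Let `V` be a finite-dimensional vector space of dimension `m` over a field `k`, with basis
`v_1, ..., v_m`.  Suppose for each `i` we are given a finite index set `T_i` and vectors
`v_{i,r} ∈ V` for `r ∈ T_i` such that `v_i = Σ_{r ∈ T_i} v_{i,r}`.  Then for each `i` there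
exists `r_i ∈ T_i` such that `{v_{i,r_i}}_{i=1}^m` is a basis of `V`. -/
theorem stmt0 {k V ι : Type*} [Field k] [AddCommGroup V] [Module k V]
    {m : ℕ} (b : Module.Basis (Fin m) k V)
    (T : Fin m → Finset ι) (v : Fin m → ι → V)
    (hsum : ∀ i : Fin m, b i = ∑ r ∈ T i, v i r) :
    ∃ r : Fin m → ι, (∀ i, r i ∈ T i) ∧
      LinearIndependent k (fun i : Fin m => v i (r i)) ∧
      Submodule.span k (Set.range (fun i : Fin m => v i (r i))) = ⊤ := by
  classical
  -- T i is nonempty since b i ≠ 0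
  have hTne : ∀ i, ∃ t, t ∈ T i := by
    intro i
    by_contra h
    push_neg at h
    have : T i = ∅ := Finset.eq_empty_of_forall_notMem h
    have hb : b i = 0 := by rw [hsum i, this, Finset.sum_empty]
    exact b.ne_zero i hb
  -- main induction: for each n ≤ m, there's a partial choice with nonzero determinant
  have key : ∀ n : ℕ, n ≤ m → ∃ r : Fin m → ι, (∀ i, r i ∈ T i) ∧
      b.det (fun i : Fin m => if (i : ℕ) < n then v i (r i) else b i) ≠ 0 := by
    intro n
    induction n with
    | zero =>
      intro _
      choose r hr using hTne
      refine ⟨r, hr, ?_⟩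
      have : (fun i : Fin m => if (i : ℕ) < 0 then v i (r i) else b i) = b := by
        funext i; simp
      rw [this, b.det_self]
      exact one_ne_zero
    | succ n ih =>
      intro hn
      obtain ⟨r, hr, hdet⟩ := ih (Nat.le_of_succ_le hn)
      set w : Fin m → V := fun i : Fin m => if (i : ℕ) < n then v i (r i) else b i with hw
      have hnm : n < m := hn
      set N : Fin m := ⟨n, hnm⟩ with hN
      have hwN : w N = b N := by simp [hw, hN]
      have hupdate : Function.update w N (∑ t ∈ T N, v N t) = w := by
        rw [← hsum N, ← hwN, Function.update_eq_self]
      have hsumdet : ∑ t ∈ T N, b.det (Function.update w N (v N t)) ≠ 0 := by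
        rw [← AlternatingMap.map_update_sum, hupdate]
        exact hdet
      obtain ⟨t, htT, htne⟩ : ∃ t ∈ T N, b.det (Function.update w N (v N t)) ≠ 0 := by
        by_contra h
        push_neg at h
        exact hsumdet (Finset.sum_eq_zero h)
      refine ⟨Function.update r N t, ?_, ?_⟩
      · intro i
        rcases eq_or_ne i N with rfl | hi
        · simpa using htT
        · rw [Function.update_of_ne hi]; exact hr i
      · have : (fun i : Fin m => if (i : ℕ) < n + 1 then v i (Function.update r N t i) else b i)
            = Function.update w N (v N t) := by
          funext i
          rcases eq_or_ne i N with rfl | hi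
          · simp [hN]
          · rw [Function.update_of_ne hi, Function.update_of_ne hi, hw]
            have : (i : ℕ) ≠ n := fun h => hi (Fin.ext h)
            by_cases hlt : (i : ℕ) < n
            · simp [hlt, Nat.lt_succ_of_lt hlt]
            · have : ¬ (i : ℕ) < n + 1 := by omega
              simp [hlt, this]
        rw [this]
        exact htne
  obtain ⟨r, hr, hdet⟩ := key m le_rfl
  have heq : (fun i : Fin m => if (i : ℕ) < m then v i (r i) else b i)
      = fun i : Fin m => v i (r i) := by
    funext i; simp [i.isLt]
  rw [heq] at hdet
  refine ⟨r, hr, ?_⟩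
  exact (Module.Basis.is_basis_iff_det b).mpr (isUnit_iff_ne_zero.mpr hdet)
end

section
/- Let A ⊆ R be commutative rings with R finitely generated as an A-module, and let d ∈ A. Suppose the localization map A[d⁻¹] → R[d⁻¹] is surjective and R = A + dR. Then A = R. -/
/-- If the localization map `A[d⁻¹] → R[d⁻¹]` is surjective, then every element of `R` is
pushed into `A` by a power of `d`. -/
lemma stmt3_aux {R : Type*} [CommRing R] (A : Subring R) (d : A)
    (hsurj : Function.Surjective (Localization.awayMap A.subtype d))
    (x : R) : ∃ n : ℕ, (d:R)^n * x ∈ A := by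
  obtain ⟨y, hy⟩ := hsurj (algebraMap R (Localization.Away (A.subtype d)) x)
  obtain ⟨a, s, rfl⟩ := IsLocalization.exists_mk'_eq (Submonoid.powers d) y
  obtain ⟨n, hn⟩ := s.2
  unfold Localization.awayMap IsLocalization.Away.map at hy
  rw [IsLocalization.map_mk'] at hy
  rw [IsLocalization.mk'_eq_iff_eq_mul, ← map_mul,
    IsLocalization.eq_iff_exists (Submonoid.powers ((A.subtype) d))] at hy
  obtain ⟨c, hc⟩ := hy
  obtain ⟨m, hm⟩ := c.2
  refine ⟨m + n, ?_⟩
  have hsv : ((⟨A.subtype s, by exact ⟨n, by rw [← hn]; push_cast; rfl⟩⟩ :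
      Submonoid.powers ((A.subtype) d)) : R) = (d:R)^n := by
    simp [← hn]
  have key : (d:R)^m * (a:R) = (d:R)^m * (x * (d:R)^n) := by
    calc (d:R)^m * (a:R) = c * (A.subtype a) := by rw [← hm]; rfl
    _ = c * (x * _) := hc
    _ = (d:R)^m * (x * (d:R)^n) := by rw [← hm, hsv]; rfl
  have : (d:R)^(m+n) * x = (d:R)^m * (a : R) := by
    rw [key]; ring
  rw [this]
  exact A.mul_mem (A.pow_mem d.2 m) a.2

/-- Let `A ⊆ R` be commutative rings with `R` finitely generated as an `A`-module, and `d ∈ A`.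
Suppose the localization map `A[d⁻¹] → R[d⁻¹]` is surjective and `R = A + dR`.  Then `A = R`. -/
theorem stmt3 {R : Type*} [CommRing R] (A : Subring R) (d : A)
    [Module.Finite A R]
    (hsurj : Function.Surjective (Localization.awayMap A.subtype d))
    (hsum : ∀ r : R, ∃ a ∈ A, ∃ r' : R, r = a + (d : R) * r') :
    A = ⊤ := by
  have key2 := stmt3_aux A d hsurj
  have hsmul : ∀ (a : A) (x : R), a • x = (a:R) * x := fun a x => rfl
  set N : Submodule A R := Submodule.span A {1} with hNdef
  have hN : ∀ x : R, x ∈ N ↔ x ∈ A := by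
    intro x
    rw [hNdef, Submodule.mem_span_singleton]
    constructor
    · rintro ⟨a, rfl⟩; rw [hsmul, mul_one]; exact a.2
    · intro hx; exact ⟨⟨x, hx⟩, by rw [hsmul, mul_one]⟩
  set I : Ideal A := Ideal.span {d} with hIdef
  have hmk0 : ∀ x : R, N.mkQ x = 0 ↔ x ∈ A := by
    intro x
    rw [Submodule.mkQ_apply, Submodule.Quotient.mk_eq_zero, hN]
  have hfg : (⊤ : Submodule A (R ⧸ N)).FG := Module.Finite.fg_top
  have hle : (⊤ : Submodule A (R ⧸ N)) ≤ I • ⊤ := by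
    intro q _
    obtain ⟨x, rfl⟩ := N.mkQ_surjective q
    obtain ⟨a, ha, r', rfl⟩ := hsum x
    have : N.mkQ (a + (d:R) * r') = d • N.mkQ r' := by
      rw [map_add, (hmk0 a).2 ha, zero_add, ← map_smul, hsmul]
    rw [this]
    exact Submodule.smul_mem_smul (Ideal.mem_span_singleton_self d) trivial
  obtain ⟨r, hr1, hr0⟩ :=
    Submodule.exists_sub_one_mem_and_smul_eq_zero_of_fg_of_le_smul I ⊤ hfg hle
  obtain ⟨t, ht⟩ := Ideal.mem_span_singleton'.1 hr1
  have key1 : ∀ x : R, (r:R) * x ∈ A := by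
    intro x
    have := hr0 (N.mkQ x) trivial
    rw [← map_smul, hmk0, hsmul] at this
    exact this
  have htd : (r:R) = 1 + (t:R) * (d:R) := by
    have : (t*d : A) = r - 1 := ht
    have := congrArg (Subtype.val) this
    push_cast at this
    linear_combination -this
  set s : A := -(t*d) with hs
  have hstep : ∀ x : R, x - (s:R) * x ∈ A := by
    intro x
    have := key1 x
    rw [htd] at this
    have h2 : x - (s:R)*x = (1 + (t:R)*(d:R)) * x := by push_cast [hs]; ring
    rw [h2]; exact this
  have hiter : ∀ (n : ℕ) (x : R), x - (s:R)^n * x ∈ A := by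
    intro n
    induction n with
    | zero => intro x; simpa using A.zero_mem
    | succ n ih => intro x
                   have h1 := hstep x
                   have h2 := ih ((s:R) * x)
                   have : x - (s:R)^(n+1) * x =
                       (x - (s:R)*x) + ((s:R)*x - (s:R)^n * ((s:R)*x)) := by ring
                   rw [this]
                   exact A.add_mem h1 h2
  ext x
  simp only [Subring.mem_top, iff_true]
  obtain ⟨n, hn⟩ := key2 x
  have h1 := hiter n x
  have h2 : (s:R)^n * x ∈ A := by
    have : (s:R)^n * x = (-(t:R))^n * ((d:R)^n * x) := by push_cast [hs]; ring
    rw [this]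
    exact A.mul_mem (A.pow_mem (A.neg_mem t.2) n) hn
  have := A.add_mem h1 h2
  simpa using this
end

section
/- Let 𝔤 be a Lie algebra over a field k of characteristic zero acting on its symmetric algebra S(𝔤) by derivations extending the adjoint action, let η ∈ 𝔤* and h ∈ 𝔤 with (ad h)(η) = λη for some nonzero scalar λ (coadjoint action). Then every 𝔤-invariant element p of S(𝔤) that is homogeneous of positive degree satisfies p(η) = 0. -/
open MvPolynomial

lemma euler_aux {k ι : Type*} [Field k] [Fintype ι] (p : MvPolynomial ι k) (n : ℕ)
    (hp : p.IsHomogeneous n) :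
    ∑ j : ι, X j * pderiv j p = (n : MvPolynomial ι k) * p := by
  classical
  have key : ∀ d ∈ p.support, ∑ j : ι, X j * pderiv j (monomial d (coeff d p))
      = (n : MvPolynomial ι k) * monomial d (coeff d p) := by
    intro d hd
    have hdeg : ∑ j : ι, d j = n := by
      have := hp (mem_support_iff.mp hd)
      rw [Finsupp.weight_apply] at this
      simpa [Finsupp.sum_fintype] using this
    calc ∑ j : ι, X j * pderiv j (monomial d (coeff d p))
        = ∑ j : ι, (d j : MvPolynomial ι k) * monomial d (coeff d p) := by
          refine Finset.sum_congr rfl fun j _ => ?_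
          rw [pderiv_monomial]
          by_cases hj : d j = 0
          · simp [hj]
          · rw [X, monomial_mul]
            rw [show Finsupp.single j 1 + (d - Finsupp.single j 1) = d from ?_]
            · rw [show (1 : k) * (coeff d p * (d j : k)) = (d j : k) * coeff d p by ring,
                ← C_mul_monomial, ← map_natCast (C : k →+* MvPolynomial ι k)]
            · ext i
              by_cases hij : i = j
              · subst hij
                simp [Nat.add_sub_cancel' (Nat.one_le_iff_ne_zero.mpr hj)]
              · simp [Finsupp.single_apply, Ne.symm hij]
      _ = (n : MvPolynomial ι k) * monomial d (coeff d p) := by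
          rw [← Finset.sum_mul, ← hdeg]; push_cast; ring
  nth_rewrite 1 [p.as_sum]
  simp only [map_sum, Finset.mul_sum]
  rw [Finset.sum_comm]
  calc ∑ d ∈ p.support, ∑ j : ι, X j * pderiv j (monomial d (coeff d p))
      = ∑ d ∈ p.support, (n : MvPolynomial ι k) * monomial d (coeff d p) :=
        Finset.sum_congr rfl key
    _ = (n : MvPolynomial ι k) * p := by rw [← Finset.mul_sum, ← p.as_sum]

/-- Let `𝔤` be a Lie algebra over a field `k` of characteristic zero acting on its symmetric
algebra `S(𝔤)` by derivations extending the adjoint action, let `η ∈ 𝔤*` and `h ∈ 𝔤` with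
`(ad h)(η) = λ • η` for some nonzero scalar `λ` (coadjoint action).  Then every `𝔤`-invariant
element `p` of `S(𝔤)` that is homogeneous of positive degree satisfies `p(η) = 0`.

Here `S(𝔤)` is identified, via a basis `b` of `𝔤`, with the polynomial ring `MvPolynomial ι k`;
the evaluation of `p` at `ξ ∈ 𝔤*` is `eval (fun i => ξ (b i)) p`; invariance of `p` under the
action of `a ∈ 𝔤` by derivations is the vanishing of the polynomial
`Σ_j (∂p/∂X_j) · (Σ_i (coefficient of `b i` in `⁅a, b j⁆`) · X_i)`, which is the polynomial
expression of the directional derivative of `p` along the coadjoint vector field of `a`; and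
`(ad h)(η) = λ • η` for the coadjoint action reads `η ⁅h, x⁆ = -λ * η x` for all `x`. -/
theorem stmt4 {k L ι : Type*} [Field k] [CharZero k]
    [LieRing L] [LieAlgebra k L] [Fintype ι] (b : Module.Basis ι k L)
    (p : MvPolynomial ι k) (n : ℕ) (hn : 0 < n) (hp : p.IsHomogeneous n)
    (hinv : ∀ a : L,
      ∑ j : ι, (pderiv j p) * (∑ i : ι, C (b.repr ⁅a, b j⁆ i) * X i) = 0)
    (η : Module.Dual k L) (h : L) (lam : k) (hlam : lam ≠ 0)
    (heig : ∀ x : L, η ⁅h, x⁆ = -(lam * η x)) :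
    MvPolynomial.eval (fun i => η (b i)) p = 0 := by
  classical
  set e : ι → k := fun i => η (b i) with he
  have hsum : ∀ x : L, ∑ i : ι, b.repr x i * e i = η x := by
    intro x
    have hx : ∑ i : ι, b.repr x i • b i = x := b.sum_equivFun x
    calc ∑ i : ι, b.repr x i * e i = η (∑ i : ι, b.repr x i • b i) := by
          simp only [map_sum, map_smul, smul_eq_mul, he]
      _ = η x := by rw [hx]
  have h0 := congrArg (MvPolynomial.eval e) (hinv h)
  rw [map_sum, map_zero] at h0
  have h1 : ∑ j : ι, MvPolynomial.eval e (pderiv j p) * η ⁅h, b j⁆ = 0 := by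
    rw [← h0]
    refine Finset.sum_congr rfl fun j _ => ?_
    rw [map_mul]
    congr 1
    rw [map_sum, ← hsum ⁅h, b j⁆]
    refine Finset.sum_congr rfl fun i _ => by simp [he]
  have h2 : lam * ∑ j : ι, e j * MvPolynomial.eval e (pderiv j p) = 0 := by
    rw [Finset.mul_sum, ← neg_eq_zero, ← h1, neg_eq_iff_eq_neg, ← Finset.sum_neg_distrib]
    refine Finset.sum_congr rfl fun j _ => ?_
    rw [heig (b j)]
    ring
  have h3 : ∑ j : ι, e j * MvPolynomial.eval e (pderiv j p) = 0 :=
    (mul_eq_zero.mp h2).resolve_left hlam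
  have h4 := congrArg (MvPolynomial.eval e) (euler_aux p n hp)
  rw [map_sum, map_mul] at h4
  simp only [eval_X, map_mul] at h4
  rw [h3] at h4
  have hn' : (n : k) ≠ 0 := Nat.cast_ne_zero.mpr hn.ne'
  have h5 : (n : k) * MvPolynomial.eval e p = 0 := by
    rw [← h4.symm]; norm_num
  exact (mul_eq_zero.mp h5).resolve_left hn'
end

section
/- Let 𝔞 be the 4-dimensional Lie algebra with basis {h, x, y, z} and nonzero brackets [x,y] = z, [h,x] = c·x, [h,y] = (1−c)·y, [h,z] = z over a field k of characteristic 0 with c ∉ {0,1}. Let ζ ∈ 𝔞* be the element dual to z (i.e., ζ(z) = 1, ζ(h) = ζ(x) = ζ(y) = 0). Then the coadjoint stabilizer 𝔞^ζ = {a ∈ 𝔞 : ζ([a,b]) = 0 for all b ∈ 𝔞} is zero. -/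
/-- Let `𝔞` be the 4-dimensional Lie algebra with basis `{h, x, y, z}` (`= b 0, b 1, b 2, b 3`)
and nonzero brackets `[x,y] = z`, `[h,x] = c·x`, `[h,y] = (1−c)·y`, `[h,z] = z` over a field
`k` of characteristic `0` with `c ∉ {0,1}`.  Let `ζ ∈ 𝔞*` be the element dual to `z`.  Then
the coadjoint stabilizer `𝔞^ζ = {a ∈ 𝔞 : ζ([a,b]) = 0 for all b ∈ 𝔞}` is zero. -/
theorem stmt7 {k L : Type*} [Field k] [CharZero k] [LieRing L] [LieAlgebra k L]
    (b : Module.Basis (Fin 4) k L) (c : k) (hc0 : c ≠ 0) (hc1 : c ≠ 1)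
    (hxy : ⁅b 1, b 2⁆ = b 3)
    (hhx : ⁅b 0, b 1⁆ = c • b 1)
    (hhy : ⁅b 0, b 2⁆ = (1 - c) • b 2)
    (hhz : ⁅b 0, b 3⁆ = b 3)
    (hxz : ⁅b 1, b 3⁆ = 0) (hyz : ⁅b 2, b 3⁆ = 0)
    (ζ : Module.Dual k L) (hζ3 : ζ (b 3) = 1) (hζ : ∀ i : Fin 4, i ≠ 3 → ζ (b i) = 0) :
    ∀ a : L, (∀ x : L, ζ ⁅a, x⁆ = 0) → a = 0 := by
  intro a ha
  have hζ0 : ζ (b 0) = 0 := hζ 0 (by decide)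
  have hζ1 : ζ (b 1) = 0 := hζ 1 (by decide)
  have hζ2 : ζ (b 2) = 0 := hζ 2 (by decide)
  have hyx : ⁅b 2, b 1⁆ = -b 3 := by rw [← lie_skew, hxy]
  have ha' := (b.sum_repr a).symm
  rw [Fin.sum_univ_four] at ha'
  set r := b.repr a with hr
  have e3 := ha (b 3)
  rw [ha'] at e3
  simp only [add_lie, smul_lie, hhz, hxz, hyz, lie_self, smul_zero, add_zero,
    map_add, map_smul, hζ3, smul_eq_mul, mul_one] at e3
  have e2 := ha (b 2)
  rw [ha'] at e2
  simp only [add_lie, smul_lie, hhy, hxy, lie_self, ← lie_skew (b 3) (b 2), hyz, neg_zero,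
    smul_zero, add_zero, map_add, map_smul, map_neg, hζ2, hζ3, smul_eq_mul, mul_zero,
    mul_one, zero_add] at e2
  have e1 := ha (b 1)
  rw [ha'] at e1
  simp only [add_lie, smul_lie, hhx, hyx, lie_self, ← lie_skew (b 3) (b 1), hxz, neg_zero,
    smul_zero, add_zero, smul_neg, map_add, map_smul, map_neg, hζ1, hζ3, smul_eq_mul,
    mul_zero, mul_one, zero_add, smul_eq_mul] at e1
  have hb10 : ⁅b 1, b 0⁆ = -(c • b 1) := by rw [← lie_skew, hhx]
  have hb20 : ⁅b 2, b 0⁆ = -((1 - c) • b 2) := by rw [← lie_skew, hhy]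
  have hb30 : ⁅b 3, b 0⁆ = -(b 3) := by rw [← lie_skew, hhz]
  have e0 := ha (b 0)
  rw [ha'] at e0
  simp only [add_lie, smul_lie, lie_self, hb10, hb20, hb30, smul_neg, smul_zero, smul_smul,
    zero_add, map_add, map_smul, map_neg, hζ1, hζ2, hζ3, smul_eq_mul, mul_zero, neg_zero,
    mul_one, add_zero, zero_add] at e0
  -- e3 : r 0 = 0 (or r 0 * 1 etc.), e2 : r 1 = 0, e1 : -(r 2) = 0, e0 : -(r 3) = 0
  have h0 : r 0 = 0 := by linear_combination e3
  have h1 : r 1 = 0 := by linear_combination e2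
  have h2 : r 2 = 0 := by linear_combination -e1
  have h3 : r 3 = 0 := by linear_combination -e0
  rw [ha', h0, h1, h2, h3]
  simp
end

section
/- Let k be a field, A ⊆ R commutative k-algebras with R an integral domain and finitely generated as an algebra, and suppose there exists d ∈ A nonzero such that A[d⁻¹] = R[d⁻¹] inside Frac(R). If moreover R = A + dR and R is a finitely generated A-module, then A = R. -/
set_option maxHeartbeats 1000000
set_option synthInstance.maxHeartbeats 400000


/-- Let `k` be a field, `A ⊆ R` commutative `k`-algebras with `R` an integral domain and
finitely generated as an algebra, and suppose there exists `d ∈ A` nonzero such that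
`A[d⁻¹] = R[d⁻¹]` inside `Frac(R)` (subalgebras of `Frac(R)` generated by `A`, resp. `R`,
together with `d⁻¹`).  If moreover `R = A + dR` and `R` is a finitely generated `A`-module,
then `A = R`. -/
theorem stmt15 {k R : Type*} [Field k] [CommRing R] [IsDomain R] [Algebra k R]
    [Algebra.FiniteType k R]
    (A : Subalgebra k R) [Module.Finite A R]
    (d : A) (hd : (d : R) ≠ 0)
    (hloc : Algebra.adjoin k
        ((algebraMap R (FractionRing R) '' (A : Set R)) ∪
          {(algebraMap R (FractionRing R) (d : R))⁻¹})
      = Algebra.adjoin k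
        (Set.range (algebraMap R (FractionRing R)) ∪
          {(algebraMap R (FractionRing R) (d : R))⁻¹}))
    (hsum : ∀ r : R, ∃ a ∈ A, ∃ r' : R, r = a + (d : R) * r') :
    A = ⊤ := by
  classical
  -- Nakayama on M = R / A with ideal (d)
  let N : Submodule A R :=
    { carrier := A
      add_mem' := fun h h' => A.add_mem h h'
      zero_mem' := A.zero_mem
      smul_mem' := fun a r hr => by
        have : a • r = (a : R) * r := by rw [Algebra.smul_def]; rfl
        show a • r ∈ A
        rw [this]
        exact A.mul_mem a.2 hr }
  let M := R ⧸ N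
  have hMfin : Module.Finite A M :=
    Module.Finite.of_surjective N.mkQ (Submodule.mkQ_surjective N)
  have hle : (⊤ : Submodule A M) ≤ (Ideal.span {d}) • ⊤ := by
    intro m _
    obtain ⟨r, rfl⟩ := Submodule.mkQ_surjective N m
    obtain ⟨a, ha, r', hr'⟩ := hsum r
    have : N.mkQ r = d • N.mkQ r' := by
      rw [← map_smul]
      apply (Submodule.Quotient.eq N).2
      have hsm : (d : A) • r' = (d : R) * r' := by rw [Algebra.smul_def]; rfl
      show r - (d : A) • r' ∈ A
      rw [hsm]
      have : r - (d : R) * r' = a := by rw [hr']; ring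
      rw [this]; exact ha
    rw [this]
    exact Submodule.smul_mem_smul (Ideal.subset_span rfl) trivial
  obtain ⟨x, hx1, hx0⟩ :=
    Submodule.exists_sub_one_mem_and_smul_eq_zero_of_fg_of_le_smul
      (Ideal.span {d}) (⊤ : Submodule A M) (Module.finite_def.mp hMfin) hle
  obtain ⟨c, hc⟩ := Ideal.mem_span_singleton.1 hx1
  -- xR ⊆ A
  have key : ∀ r : R, (x : R) * r ∈ A := by
    intro r
    have := hx0 (N.mkQ r) trivial
    rw [← map_smul, Submodule.mkQ_apply, Submodule.Quotient.mk_eq_zero] at this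
    have hsm : x • r = (x : R) * r := by rw [Algebra.smul_def]; rfl
    rw [hsm] at this
    exact this
  -- step: d*r ∈ A → r ∈ A
  have step : ∀ r : R, (d : R) * r ∈ A → r ∈ A := by
    intro r h
    have hxr : (x : R) = 1 + (d : R) * (c : R) := by
      have h2 : (x : R) - 1 = (d : R) * (c : R) := congrArg Subtype.val hc
      linear_combination h2
    have : r = (x : R) * r - (c : R) * ((d : R) * r) := by rw [hxr]; ring
    rw [this]
    exact A.sub_mem (key r) (A.mul_mem c.2 h)
  have pow_step : ∀ (n : ℕ) (r : R), (d : R) ^ n * r ∈ A → r ∈ A := by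
    intro n
    induction n with
    | zero => intro r h; simpa using h
    | succ n ih =>
      intro r h
      apply step
      apply ih
      have : (d : R) ^ n * ((d : R) * r) = (d : R) ^ (n + 1) * r := by ring
      rw [this]; exact h
  -- localization argument
  set f := algebraMap R (FractionRing R) with hf
  have hfinj : Function.Injective f := IsFractionRing.injective R (FractionRing R)
  have hfd : f (d : R) ≠ 0 := fun h => hd (hfinj (by simpa using h))
  let S : Subalgebra k (FractionRing R) :=
    { carrier := {y | ∃ n : ℕ, ∃ a ∈ A, f (d : R) ^ n * y = f a}
      mul_mem' := by
        rintro y z ⟨n, a, ha, hy⟩ ⟨m, b, hb, hz⟩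
        exact ⟨n + m, a * b, A.mul_mem ha hb, by rw [map_mul, ← hy, ← hz]; ring⟩
      add_mem' := by
        rintro y z ⟨n, a, ha, hy⟩ ⟨m, b, hb, hz⟩
        refine ⟨n + m, (d : R) ^ m * a + (d : R) ^ n * b,
          A.add_mem (A.mul_mem (A.pow_mem d.2 m) ha) (A.mul_mem (A.pow_mem d.2 n) hb), ?_⟩
        rw [map_add, map_mul, map_mul, map_pow, map_pow, ← hy, ← hz]; ring
      one_mem' := ⟨0, 1, A.one_mem, by simp⟩
      algebraMap_mem' := by
        intro t
        refine ⟨0, algebraMap k R t, A.algebraMap_mem t, ?_⟩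
        simp [IsScalarTower.algebraMap_apply k R (FractionRing R)]; rfl }
  have hadj : Algebra.adjoin k
      ((f '' (A : Set R)) ∪ {(f (d : R))⁻¹}) ≤ S := by
    apply Algebra.adjoin_le
    rintro y (⟨a, ha, rfl⟩ | hy)
    · exact ⟨0, a, ha, by simp⟩
    · refine ⟨1, 1, A.one_mem, ?_⟩
      rcases hy with rfl
      simp [mul_inv_cancel₀ hfd]
  rw [eq_top_iff]
  intro r _
  have hr : f r ∈ S := by
    apply hadj
    rw [hloc]
    exact Algebra.subset_adjoin (Or.inl ⟨r, rfl⟩)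
  obtain ⟨n, a, ha, hna⟩ := hr
  have : (d : R) ^ n * r = a := by
    apply hfinj
    rw [map_mul, map_pow]; exact hna
  exact pow_step n r (this ▸ ha)
end
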